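/- The Newton polytope of the Schur polynomial s_λ(x_1,...,x_n) is the permutahedron P_λ, and s_λ has saturated Newton polytope: for every lattice point α ∈ P_λ, the coefficient of x^α in s_λ is strictly positive (it is a Kostka number). -/

import Mathlib

open Finset

/-- Sum of the first `t` coordinates of a vector. -/
def psum {n : ℕ} (v : Fin n → ℝ) (t : ℕ) : ℝ := ∑ i : Fin n, if (i : ℕ) < t then v i else 0

/-- Sum of the first `t` coordinates of a vector of naturals. -/
def npsum {n : ℕ} (v : Fin n → ℕ) (t : ℕ) : ℕ := ∑ i : Fin n, if (i : ℕ) < t then v i else 0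

/-- The decreasing rearrangement `v↓` of a vector. -/
noncomputable def decSort {n : ℕ} (v : Fin n → ℝ) : Fin n → ℝ := fun i => v (Tuple.sort v i.rev)

/-- `Majorizes w v` : `v` is majorized by `w`. -/
def Majorizes {n : ℕ} (w v : Fin n → ℝ) : Prop :=
  (∀ t, psum (decSort v) t ≤ psum (decSort w) t) ∧ ∑ i, v i = ∑ i, w i

/-- The permutahedron of `v`: convex hull of the orbit of `v` under coordinate permutations. -/
noncomputable def permutahedron {n : ℕ} (v : Fin n → ℝ) : Set (Fin n → ℝ) :=
  convexHull ℝ {w | ∃ σ : Equiv.Perm (Fin n), w = v ∘ σ}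

/-- Row `ρ` (0-indexed; 1-indexed row `ρ+1`) can receive a box: the current excess over `lam`
is `< (ρ+1) - 1 = ρ` and adding a box keeps the shape a partition. -/
def AddableRow {n : ℕ} (lam mu : Fin n → ℕ) (ρ : Fin n) : Prop :=
  mu ρ < lam ρ + (ρ : ℕ) ∧ Antitone (Function.update mu ρ (mu ρ + 1))

/-- One step of the northmost-box-adding construction relative to the base partition `lam`. -/
def NorthStep {n : ℕ} (lam muprev munext : Fin n → ℕ) : Prop :=
  ∃ ρ : Fin n, AddableRow lam muprev ρ ∧ (∀ ρ' : Fin n, ρ' < ρ → ¬ AddableRow lam muprev ρ') ∧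
    munext = Function.update muprev ρ (muprev ρ + 1)

/-- A row- and column-strictly increasing skew tableau of shape `mu/lam` whose entries in
(1-indexed) row `r+1` lie in `{1, ..., r}`, i.e. are at most `(r+1) - 1`. -/
def IsFlaggedTableau {n : ℕ} (lam mu : Fin n → ℕ) (T : Fin n → ℕ → ℕ) : Prop :=
  (∀ i, lam i ≤ mu i) ∧
  (∀ r : Fin n, ∀ c, lam r ≤ c → c < mu r → 1 ≤ T r c ∧ T r c ≤ (r : ℕ)) ∧
  (∀ r : Fin n, ∀ c c', lam r ≤ c → c < c' → c' < mu r → T r c < T r c') ∧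
  (∀ r r' : Fin n, r < r' → ∀ c, lam r ≤ c → c < mu r → lam r' ≤ c → c < mu r' → T r c < T r' c)

/-- The number of flagged tableaux of shape `mu/lam` (tableaux normalized to vanish off the shape). -/
noncomputable def flaggedCount {n : ℕ} (lam mu : Fin n → ℕ) : ℕ :=
  Set.ncard {T : Fin n → ℕ → ℕ | IsFlaggedTableau lam mu T ∧
    ∀ (r : Fin n) (c : ℕ), (c < lam r ∨ mu r ≤ c) → T r c = 0}

/-- The coefficient `a_{lam,mu}` in the Schur expansion of the symmetric Grothendieck polynomial. -/
noncomputable def grothCoeff {n : ℕ} (lam mu : Fin n → ℕ) : ℝ :=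
  if Antitone mu ∧ ∀ i, lam i ≤ mu i then
    (-1 : ℝ) ^ (∑ i, mu i - ∑ i, lam i) * flaggedCount lam mu
  else 0

/-- A semistandard Young tableau of shape `lam` with entries in `{1, ..., n}`. -/
def IsSSYT {n : ℕ} (lam : Fin n → ℕ) (T : Fin n → ℕ → ℕ) : Prop :=
  (∀ r : Fin n, ∀ c, c < lam r → 1 ≤ T r c ∧ T r c ≤ n) ∧
  (∀ r : Fin n, ∀ c c', c ≤ c' → c' < lam r → T r c ≤ T r c') ∧
  (∀ r r' : Fin n, r < r' → ∀ c, c < lam r' → c < lam r → T r c < T r' c)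

/-- The Kostka number `K_{lam,α}`: the number of SSYT of shape `lam` and weight `α`. -/
noncomputable def kostka {n : ℕ} (lam : Fin n → ℕ) (α : Fin n →₀ ℕ) : ℕ :=
  Set.ncard {T : Fin n → ℕ → ℕ | IsSSYT lam T ∧ (∀ (r : Fin n) (c : ℕ), lam r ≤ c → T r c = 0) ∧
    ∀ i : Fin n, α i = Set.ncard {p : Fin n × ℕ | p.2 < lam p.1 ∧ T p.1 p.2 = (i : ℕ) + 1}}

/-- The Schur polynomial `s_lam(x_1, ..., x_n)`, as the generating polynomial of SSYT. -/
noncomputable def schur {n : ℕ} (lam : Fin n → ℕ) : MvPolynomial (Fin n) ℝ :=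
  ∑ α ∈ Finset.Iic (Finsupp.equivFunOnFinite.symm (fun _ : Fin n => ∑ i, lam i)),
    (kostka lam α : ℝ) • MvPolynomial.monomial α 1

/-- The symmetric Grothendieck polynomial `G_lam(x_1, ..., x_n) = ∑_mu a_{lam,mu} s_mu`. -/
noncomputable def grothendieck {n : ℕ} (lam : Fin n → ℕ) : MvPolynomial (Fin n) ℝ :=
  ∑ m ∈ Finset.Iic (Finsupp.equivFunOnFinite.symm (fun i : Fin n => lam i + (i : ℕ))),
    grothCoeff lam (fun i => m i) • schur (fun i => m i)

/-- The Newton polytope of a polynomial: convex hull of its exponent vectors. -/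
noncomputable def newton {n : ℕ} (f : MvPolynomial (Fin n) ℝ) : Set (Fin n → ℝ) :=
  convexHull ℝ ((fun α : Fin n →₀ ℕ => fun i => (α i : ℝ)) '' (f.support : Set (Fin n →₀ ℕ)))

/-- A polynomial has saturated Newton polytope (SNP) if every lattice point of its Newton
polytope is an exponent vector with nonzero coefficient. -/
def SNP {n : ℕ} (f : MvPolynomial (Fin n) ℝ) : Prop :=
  ∀ α : Fin n →₀ ℕ, (fun i => (α i : ℝ)) ∈ newton f → MvPolynomial.coeff α f ≠ 0

open Finset

/-- Lower subsets of `ℕ` are initial ranges. -/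
theorem lowerset_eq_range (S : Finset ℕ) (h : ∀ a b, b ∈ S → a ≤ b → a ∈ S) :
    S = Finset.range S.card := by
  ext x
  simp only [Finset.mem_range]
  constructor
  · intro hx
    have hsub : Finset.range (x+1) ⊆ S := by
      intro y hy
      exact h y x hx (by simpa using Nat.lt_succ_iff.mp (Finset.mem_range.mp hy))
    have := Finset.card_le_card hsub
    simpa using this
  · intro hx
    by_contra hx'
    have hsub : S ⊆ Finset.range x := by
      intro y hy
      simp only [Finset.mem_range]
      by_contra hyx
      exact hx' (h x y hy (by omega))
    have := Finset.card_le_card hsub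
    simp only [Finset.card_range] at this
    omega

/-- The prefix-sum matrix of the greedy Gelfand-Tsetlin chain. -/
def Dmat (n : ℕ) (f g : ℕ → ℕ) : ℕ → ℕ → ℕ
  | 0 => fun t => ∑ i ∈ Finset.range t, f i
  | (d+1) => fun t => min (Dmat n f g d t) (Dmat n f g d (t+1) - g (n - (d+1)))

theorem Dmat_props (n : ℕ) (f g : ℕ → ℕ) (hf : ∀ i j : ℕ, i ≤ j → f j ≤ f i)
    (hf0 : ∀ i, n ≤ i → f i = 0)
    (hsub : ∀ S : Finset ℕ, S ⊆ Finset.range n →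
      ∑ i ∈ S, g i ≤ ∑ i ∈ Finset.range S.card, f i)
    (hsum : ∑ i ∈ Finset.range n, g i = ∑ i ∈ Finset.range n, f i) :
    ∀ d, d ≤ n →
      (∀ t, Dmat n f g d t ≤ Dmat n f g d (t+1)) ∧
      (Dmat n f g d 0 = 0) ∧
      (∀ t, Dmat n f g d t + Dmat n f g d (t+2) ≤ 2 * Dmat n f g d (t+1)) ∧
      (∀ S : Finset ℕ, S ⊆ Finset.range (n-d) → ∑ i ∈ S, g i ≤ Dmat n f g d S.card) ∧
      (∀ t, n - d ≤ t → Dmat n f g d t = ∑ i ∈ Finset.range (n-d), g i) := by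
  intro d
  induction d with
  | zero =>
    intro _
    refine ⟨?_, by simp [Dmat], ?_, ?_, ?_⟩
    · intro t
      exact Finset.sum_le_sum_of_subset (Finset.range_subset_range.mpr (by omega))
    · intro t
      simp only [Dmat, Finset.sum_range_succ]
      have := hf t (t+1) (by omega)
      omega
    · intro S hS
      simpa [Dmat] using hsub S hS
    · intro t ht
      simp only [Nat.sub_zero] at ht ⊢
      have : Dmat n f g 0 t = ∑ i ∈ Finset.range n, f i := by
        simp only [Dmat]
        rw [← Finset.sum_subset (Finset.range_subset_range.mpr ht)]
        intro x _ hx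
        exact hf0 x (by simpa using hx)
      rw [this, hsum]
  | succ d IH =>
    intro hd1
    have hd : d ≤ n := by omega
    obtain ⟨mono, zero, conc, inv, const⟩ := IH hd
    set F := Dmat n f g d with hF
    have hFmono : Monotone F := monotone_nat_of_le_succ mono
    set k := n - (d+1) with hk
    have hkd : n - d = k + 1 := by omega
    have ha : g k ≤ F 1 := by
      have := inv {k} (by simp [Finset.mem_range]; omega)
      simpa using this
    have hDs : ∀ t, Dmat n f g (d+1) t = min (F t) (F (t+1) - g k) := fun t => rfl
    refine ⟨?_, ?_, ?_, ?_, ?_⟩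
    · intro t
      rw [hDs, hDs]
      have := mono t; have := mono (t+1)
      omega
    · rw [hDs]
      have := zero
      omega
    · intro t
      rw [hDs, hDs, hDs]
      have e1 : t+1+1 = t+2 := by omega
      have e2 : t+2+1 = t+3 := by omega
      have e4 : t+1+2 = t+3 := by omega
      rw [e1, e2]
      have c1 := conc t; have c2 := conc (t+1)
      rw [e1] at c1 c2; rw [e4] at c2
      have m1 := mono t; have m2 := mono (t+1); have m3 := mono (t+2)
      rw [e1] at m2; rw [e2] at m3
      have h1 : F 1 ≤ F (t+1) := hFmono (by omega)
      omega
    · intro S hS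
      have h1 : ∑ i ∈ S, g i ≤ F S.card := by
        refine inv S (hS.trans (Finset.range_subset_range.mpr (by omega)))
      have hknS : k ∉ S := by
        intro hmem
        have := hS hmem
        simp only [Finset.mem_range] at this
        omega
      have h2 : g k + ∑ i ∈ S, g i ≤ F (S.card + 1) := by
        have hins : insert k S ⊆ Finset.range (n - d) := by
          intro x hx
          rcases Finset.mem_insert.mp hx with rfl | hx
          · simp [Finset.mem_range]; omega
          · exact (hS.trans (Finset.range_subset_range.mpr (by omega))) hx
        have := inv _ hins
        rwa [Finset.sum_insert hknS, Finset.card_insert_of_notMem hknS] at this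
      rw [hDs]
      omega
    · intro t ht
      rw [hDs]
      have hsucc : ∑ i ∈ Finset.range (k+1), g i = ∑ i ∈ Finset.range k, g i + g k :=
        Finset.sum_range_succ g k
      have hFt1 : F (t+1) = ∑ i ∈ Finset.range (k+1), g i := by
        rw [← hkd]; exact const (t+1) (by omega)
      rcases Nat.lt_or_ge t (k+1) with hlt | hge
      · have htk : t = k := by omega
        have hBle : ∑ i ∈ Finset.range k, g i ≤ F k := by
          have := inv (Finset.range k) (by rw [hkd]; exact Finset.range_subset_range.mpr (by omega))
          simpa using this
        rw [htk] at hFt1 ⊢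
        omega
      · have hFt : F t = ∑ i ∈ Finset.range (k+1), g i := by
          rw [← hkd]; exact const t (by omega)
        omega

/-- Abstract one-step strip lemma. -/
theorem strip_aux (F : ℕ → ℕ) (a : ℕ) (hm : ∀ t, F t ≤ F (t+1))
    (hc : ∀ t, F t + F (t+2) ≤ 2 * F (t+1)) (h0 : F 0 = 0) (ha : a ≤ F 1) (i : ℕ) :
    (min (F (i+1)) (F (i+2) - a)) - (min (F i) (F (i+1) - a)) ≤ F (i+1) - F i ∧
    F (i+2) - F (i+1) ≤ (min (F (i+1)) (F (i+2) - a)) - (min (F i) (F (i+1) - a)) := by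
  have m1 := hm i; have m2 := hm (i+1)
  have c1 := hc i; have c2 := hc (i+1)
  have h1 : F 1 ≤ F (i+1) := (monotone_nat_of_le_succ hm) (by omega)
  have hc0 := hc 0
  have hm0 := hm 0
  omega

/-- Row `i` of the `k`-th shape in the greedy chain. -/
def muF (n : ℕ) (f g : ℕ → ℕ) (k i : ℕ) : ℕ :=
  Dmat n f g (n-k) (i+1) - Dmat n f g (n-k) i

/-- The candidate entry (count) function. -/
def cntF (n : ℕ) (f g : ℕ → ℕ) (r c : ℕ) : ℕ :=
  ∑ k ∈ Finset.range n, if muF n f g k r ≤ c then 1 else 0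

/-- The candidate tableau. -/
def TabF (n : ℕ) (f g : ℕ → ℕ) (r c : ℕ) : ℕ :=
  if c < f r then cntF n f g r c else 0

theorem muF_facts (n : ℕ) (f g : ℕ → ℕ) (hf : ∀ i j : ℕ, i ≤ j → f j ≤ f i)
    (hf0 : ∀ i, n ≤ i → f i = 0)
    (hsub : ∀ S : Finset ℕ, S ⊆ Finset.range n →
      ∑ i ∈ S, g i ≤ ∑ i ∈ Finset.range S.card, f i)
    (hsum : ∑ i ∈ Finset.range n, g i = ∑ i ∈ Finset.range n, f i) :
    (∀ i, muF n f g 0 i = 0) ∧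
    (∀ i, muF n f g n i = f i) ∧
    (∀ k k' i, k ≤ k' → k' ≤ n → muF n f g k i ≤ muF n f g k' i) ∧
    (∀ k i, k < n → muF n f g (k+1) (i+1) ≤ muF n f g k i) ∧
    (∀ k, k ≤ n → ∑ r ∈ Finset.range n, muF n f g k r = ∑ i ∈ Finset.range k, g i) ∧
    (∀ k i, k ≤ n → muF n f g k i ≤ f i) := by
  have props := Dmat_props n f g hf hf0 hsub hsum
  have h0 : ∀ i, muF n f g 0 i = 0 := by
    intro i
    obtain ⟨-, -, -, -, const⟩ := props n le_rfl
    unfold muF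
    rw [Nat.sub_zero, const (i+1) (by omega), const i (by omega)]
    omega
  have hstep : ∀ k i, k < n → muF n f g k i ≤ muF n f g (k+1) i ∧
      muF n f g (k+1) (i+1) ≤ muF n f g k i := by
    intro k i hk
    set d := n - k - 1 with hd
    have hdn : d ≤ n := by omega
    obtain ⟨mono, zero, conc, inv, -⟩ := props d hdn
    have hnk1 : n - (k+1) = d := by omega
    have hnk : n - k = d + 1 := by omega
    have hkn : n - (d+1) = k := by omega
    have ha : g k ≤ Dmat n f g d 1 := by
      have := inv {k} (by simp [Finset.mem_range]; omega)
      simpa using this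
    have hG : ∀ t, Dmat n f g (d+1) t
        = min (Dmat n f g d t) (Dmat n f g d (t+1) - g k) := by
      intro t
      show min (Dmat n f g d t) (Dmat n f g d (t+1) - g (n - (d+1)))
        = min (Dmat n f g d t) (Dmat n f g d (t+1) - g k)
      rw [hkn]
    have hs := strip_aux (Dmat n f g d) (g k) mono conc zero ha i
    constructor
    · unfold muF
      rw [hnk1, hnk, hG, hG]
      exact hs.1
    · unfold muF
      rw [hnk1, hnk, hG, hG]
      exact hs.2
  have hchain : ∀ k k' i, k ≤ k' → k' ≤ n → muF n f g k i ≤ muF n f g k' i := by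
    intro k k' i hkk hkn
    induction k' with
    | zero => simp_all
    | succ m IH =>
      rcases Nat.lt_or_ge k (m+1) with h | h
      · exact le_trans (IH (by omega) (by omega)) (hstep m i (by omega)).1
      · have : k = m + 1 := by omega
        subst this; exact le_rfl
  have hn : ∀ i, muF n f g n i = f i := by
    intro i
    unfold muF
    rw [Nat.sub_self]
    show (∑ j ∈ Finset.range (i+1), f j) - (∑ j ∈ Finset.range i, f j) = f i
    rw [Finset.sum_range_succ]
    omega
  refine ⟨h0, hn, hchain, fun k i hk => (hstep k i hk).2, ?_, ?_⟩
  · intro k hk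
    have hdn : n - k ≤ n := by omega
    obtain ⟨mono, zero, -, -, const⟩ := props (n-k) hdn
    have hrow : ∀ m, ∑ r ∈ Finset.range m, muF n f g k r = Dmat n f g (n-k) m := by
      intro m
      induction m with
      | zero => simpa using zero.symm
      | succ m IH =>
        rw [Finset.sum_range_succ, IH]
        unfold muF
        have := mono m
        omega
    rw [hrow n, const n (by omega), show n - (n-k) = k by omega]
  · intro k i hk
    calc muF n f g k i ≤ muF n f g n i := hchain k n i hk le_rfl
    _ = f i := hn i

theorem cntF_facts (n : ℕ) (f g : ℕ → ℕ) (hf0 : ∀ i, n ≤ i → f i = 0)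
    (hmu0 : ∀ i, muF n f g 0 i = 0)
    (hchain : ∀ k k' i, k ≤ k' → k' ≤ n → muF n f g k i ≤ muF n f g k' i)
    (r c : ℕ) (hc : c < f r) :
    (1 ≤ cntF n f g r c ∧ cntF n f g r c ≤ n) ∧
    (∀ k, k < n → (muF n f g k r ≤ c ↔ k < cntF n f g r c)) := by
  have hrn : r < n := by
    by_contra h
    rw [hf0 r (by omega)] at hc; omega
  set S := (Finset.range n).filter (fun k => muF n f g k r ≤ c) with hS
  have hcard : cntF n f g r c = S.card := by
    rw [hS, Finset.card_filter]
    rfl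
  have hlower : ∀ a b, b ∈ S → a ≤ b → a ∈ S := by
    intro a b hb hab
    rw [hS, Finset.mem_filter, Finset.mem_range] at hb ⊢
    exact ⟨by omega, le_trans (hchain a b r hab (by omega)) hb.2⟩
  have hrange := lowerset_eq_range S hlower
  have hmem : ∀ k, k < n → (muF n f g k r ≤ c ↔ k < cntF n f g r c) := by
    intro k hk
    rw [hcard]
    constructor
    · intro h
      have : k ∈ S := by rw [hS, Finset.mem_filter, Finset.mem_range]; exact ⟨hk, h⟩
      rw [hrange, Finset.mem_range] at this; exact this
    · intro h
      have : k ∈ S := by rw [hrange, Finset.mem_range]; exact h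
      rw [hS, Finset.mem_filter] at this; exact this.2
  refine ⟨⟨?_, ?_⟩, hmem⟩
  · have h0 : (0:ℕ) ∈ S := by
      rw [hS, Finset.mem_filter, Finset.mem_range]
      exact ⟨by omega, by rw [hmu0 r]; omega⟩
    rw [hcard]
    exact Finset.card_pos.mpr ⟨0, h0⟩
  · rw [hcard, hS]
    calc ((Finset.range n).filter _).card ≤ (Finset.range n).card :=
      Finset.card_filter_le _ _
    _ = n := Finset.card_range n

theorem cntF_colstep (n : ℕ) (f g : ℕ → ℕ) (hf0 : ∀ i, n ≤ i → f i = 0)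
    (hmu0 : ∀ i, muF n f g 0 i = 0)
    (hmun : ∀ i, muF n f g n i = f i)
    (hstrip : ∀ k i, k < n → muF n f g (k+1) (i+1) ≤ muF n f g k i)
    (r c : ℕ) (hc : c < f (r+1)) :
    cntF n f g r c < cntF n f g (r+1) c := by
  have hrn : r + 1 < n := by
    by_contra h
    rw [hf0 (r+1) (by omega)] at hc; omega
  obtain ⟨m, rfl⟩ : ∃ m, n = m + 1 := ⟨n - 1, by omega⟩
  have hlast : ¬ (muF (m+1) f g m r ≤ c) := by
    intro h
    have h2 := hstrip m r (by omega)
    rw [hmun (r+1)] at h2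
    omega
  have e1 : cntF (m+1) f g r c = ∑ k ∈ Finset.range m, (if muF (m+1) f g k r ≤ c then 1 else 0) := by
    unfold cntF
    rw [Finset.sum_range_succ, if_neg hlast]
    omega
  have e2 : cntF (m+1) f g (r+1) c
      = (∑ k ∈ Finset.range m, (if muF (m+1) f g (k+1) (r+1) ≤ c then 1 else 0)) + 1 := by
    unfold cntF
    rw [Finset.sum_range_succ']
    congr 1
    rw [if_pos]
    rw [hmu0 (r+1)]; omega
  rw [e1, e2]
  have hle : ∑ k ∈ Finset.range m, (if muF (m+1) f g k r ≤ c then 1 else 0)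
      ≤ ∑ k ∈ Finset.range m, (if muF (m+1) f g (k+1) (r+1) ≤ c then 1 else 0) := by
    apply Finset.sum_le_sum
    intro k hk
    rw [Finset.mem_range] at hk
    have := hstrip k r (by omega)
    split <;> split <;> omega
  omega

theorem cntF_col (n : ℕ) (f g : ℕ → ℕ) (hf : ∀ i j : ℕ, i ≤ j → f j ≤ f i)
    (hf0 : ∀ i, n ≤ i → f i = 0)
    (hmu0 : ∀ i, muF n f g 0 i = 0)
    (hmun : ∀ i, muF n f g n i = f i)
    (hstrip : ∀ k i, k < n → muF n f g (k+1) (i+1) ≤ muF n f g k i) :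
    ∀ d r c, c < f (r+d+1) → cntF n f g r c < cntF n f g (r+d+1) c := by
  intro d
  induction d with
  | zero => exact fun r c hc => cntF_colstep n f g hf0 hmu0 hmun hstrip r c hc
  | succ d IH =>
    intro r c hc
    have e : r+(d+1)+1 = r+d+1+1 := by omega
    rw [e] at hc ⊢
    have h1 : c < f (r+d+1) := lt_of_lt_of_le hc (hf (r+d+1) (r+d+1+1) (by omega))
    exact lt_trans (IH r c h1) (cntF_colstep n f g hf0 hmu0 hmun hstrip (r+d+1) c hc)

theorem TabF_box (n : ℕ) (f g : ℕ → ℕ) (hf0 : ∀ i, n ≤ i → f i = 0)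
    (hmu0 : ∀ i, muF n f g 0 i = 0)
    (hmun : ∀ i, muF n f g n i = f i)
    (hchain : ∀ k k' i, k ≤ k' → k' ≤ n → muF n f g k i ≤ muF n f g k' i)
    (hle : ∀ k i, k ≤ n → muF n f g k i ≤ f i)
    (i : ℕ) (hi : i < n) (r c : ℕ) :
    (c < f r ∧ TabF n f g r c = i+1) ↔ (muF n f g i r ≤ c ∧ c < muF n f g (i+1) r) := by
  constructor
  · rintro ⟨h1, h2⟩
    rw [TabF, if_pos h1] at h2
    obtain ⟨⟨hb1, hb2⟩, hiff⟩ := cntF_facts n f g hf0 hmu0 hchain r c h1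
    refine ⟨(hiff i hi).mpr (by omega), ?_⟩
    rcases Nat.lt_or_ge (i+1) n with h | h
    · have := hiff (i+1) h
      by_contra hcon
      have := this.mp (by omega)
      omega
    · have : i + 1 = n := by omega
      rw [this, hmun r]
      by_contra hcon
      omega
  · rintro ⟨h1, h2⟩
    have hcf : c < f r := lt_of_lt_of_le h2 (hle (i+1) r (by omega))
    obtain ⟨⟨hb1, hb2⟩, hiff⟩ := cntF_facts n f g hf0 hmu0 hchain r c hcf
    refine ⟨hcf, ?_⟩
    rw [TabF, if_pos hcf]
    have hgei : i < cntF n f g r c := (hiff i hi).mp h1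
    rcases Nat.lt_or_ge (i+1) n with h | h
    · have := hiff (i+1) h
      by_contra hcon
      have h3 : muF n f g (i+1) r ≤ c := this.mpr (by omega)
      omega
    · omega

theorem exists_ssyt {n : ℕ} (lam : Fin n → ℕ) (hlam : Antitone lam) (α : Fin n →₀ ℕ)
    (hsub : ∀ S : Finset (Fin n),
      ∑ i ∈ S, α i ≤ ∑ i : Fin n, (if (i : ℕ) < S.card then lam i else 0))
    (hsum : ∑ i, α i = ∑ i, lam i) :
    ∃ T : Fin n → ℕ → ℕ, IsSSYT lam T ∧ (∀ (r : Fin n) (c : ℕ), lam r ≤ c → T r c = 0) ∧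
      ∀ i : Fin n, α i = Set.ncard {p : Fin n × ℕ | p.2 < lam p.1 ∧ T p.1 p.2 = (i : ℕ) + 1} := by
  classical
  set f : ℕ → ℕ := fun i => if h : i < n then lam ⟨i, h⟩ else 0 with hfdef
  set g : ℕ → ℕ := fun i => if h : i < n then α ⟨i, h⟩ else 0 with hgdef
  have hfFin : ∀ r : Fin n, f (r : ℕ) = lam r := by
    intro r; rw [hfdef]; simp
  have hgFin : ∀ r : Fin n, g (r : ℕ) = α r := by
    intro r; rw [hgdef]; simp
  have hf : ∀ i j : ℕ, i ≤ j → f j ≤ f i := by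
    intro i j hij
    simp only [hfdef]
    by_cases hj : j < n
    · rw [dif_pos hj, dif_pos (show i < n by omega)]
      exact hlam (show (⟨i, by omega⟩ : Fin n) ≤ ⟨j, hj⟩ from hij)
    · rw [dif_neg hj]; omega
  have hf0 : ∀ i, n ≤ i → f i = 0 := by
    intro i hi; simp only [hfdef]; rw [dif_neg (by omega)]
  have hpre : ∀ t, ∑ i ∈ Finset.range t, f i
      = ∑ i : Fin n, (if (i : ℕ) < t then lam i else 0) := by
    intro t
    have h1 : ∑ i ∈ Finset.range t, f i = ∑ i ∈ Finset.range (min n t), f i := by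
      refine (Finset.sum_subset (Finset.range_subset_range.mpr (by omega)) ?_).symm
      intro x hx hnx
      simp only [Finset.mem_range] at hx hnx
      exact hf0 x (by omega)
    have h2 : (Finset.range n).filter (fun i => i < t) = Finset.range (min n t) := by
      ext x; simp [Finset.mem_filter, Finset.mem_range, lt_min_iff]
    rw [h1, ← h2, Finset.sum_filter, Finset.sum_range
      (fun i => if i < t then f i else 0)]
    apply Finset.sum_congr rfl
    intro i _
    rw [hfFin]
  have hsubN : ∀ S : Finset ℕ, S ⊆ Finset.range n →
      ∑ i ∈ S, g i ≤ ∑ i ∈ Finset.range S.card, f i := by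
    intro S hS
    have hmem : ∀ m ∈ S, m < n := fun m hm => Finset.mem_range.mp (hS hm)
    have h1 : ∑ i ∈ S.attachFin hmem, α i = ∑ m ∈ S, g m := by
      apply Finset.sum_bij (fun (i : Fin n) _ => (i : ℕ))
      · intro a ha; rwa [Finset.mem_attachFin] at ha
      · intro a _ b _ hab; exact Fin.val_injective hab
      · intro b hb; exact ⟨⟨b, hmem b hb⟩, by rwa [Finset.mem_attachFin], rfl⟩
      · intro a _; rw [← hgFin a]
    have h2 := hsub (S.attachFin hmem)
    rw [h1, Finset.card_attachFin] at h2
    rw [hpre S.card]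
    exact h2
  have hsumN : ∑ i ∈ Finset.range n, g i = ∑ i ∈ Finset.range n, f i := by
    rw [Finset.sum_range fun i => g i, Finset.sum_range fun i => f i]
    calc (∑ i : Fin n, g (i:ℕ)) = ∑ i : Fin n, α i := by
          apply Finset.sum_congr rfl; intro i _; rw [hgFin]
    _ = ∑ i : Fin n, lam i := hsum
    _ = ∑ i : Fin n, f (i:ℕ) := by
          apply Finset.sum_congr rfl; intro i _; rw [hfFin]
  obtain ⟨hmu0, hmun, hchain, hstrip, hrowsum, hmule⟩ := muF_facts n f g hf hf0 hsubN hsumN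
  refine ⟨fun r c => TabF n f g (r : ℕ) c, ⟨?_, ?_, ?_⟩, ?_, ?_⟩
  · -- bounds
    intro r c hc
    rw [← hfFin r] at hc
    obtain ⟨⟨h1, h2⟩, -⟩ := cntF_facts n f g hf0 hmu0 hchain (r : ℕ) c hc
    simp only [TabF]
    rw [if_pos hc]
    exact ⟨h1, h2⟩
  · -- rows
    intro r c c' hcc hc'
    rw [← hfFin r] at hc'
    have hc : c < f (r : ℕ) := by omega
    simp only [TabF]
    rw [if_pos hc, if_pos hc']
    apply Finset.sum_le_sum
    intro k _
    split <;> split <;> omega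
  · -- columns
    intro r r' hrr c hc' hc
    rw [← hfFin r] at hc
    rw [← hfFin r'] at hc'
    have hval : (r : ℕ) < (r' : ℕ) := hrr
    simp only [TabF]
    rw [if_pos hc, if_pos hc']
    have hd : (r' : ℕ) = (r : ℕ) + ((r' : ℕ) - (r : ℕ) - 1) + 1 := by omega
    rw [hd] at hc' ⊢
    exact cntF_col n f g hf hf0 hmu0 hmun hstrip _ _ c hc'
  · -- zero outside
    intro r c hrc
    simp only [TabF]
    rw [if_neg (by rw [hfFin]; omega)]
  · -- weight
    intro i
    set B := (∑ j ∈ Finset.range n, f j) + 1 with hB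
    have hfB : ∀ r : Fin n, f (r : ℕ) < B := by
      intro r
      rw [hB]
      have : f (r : ℕ) ≤ ∑ j ∈ Finset.range n, f j :=
        Finset.single_le_sum (fun j _ => Nat.zero_le (f j)) (Finset.mem_range.mpr r.isLt)
      omega
    set Fs : Finset (Fin n × ℕ) := (Finset.univ ×ˢ Finset.range B).filter
      (fun p => muF n f g (i : ℕ) (p.1 : ℕ) ≤ p.2 ∧ p.2 < muF n f g ((i : ℕ)+1) (p.1 : ℕ))
      with hFs
    have hbox := TabF_box n f g hf0 hmu0 hmun hchain hmule (i : ℕ) i.isLt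
    have hseteq : {p : Fin n × ℕ | p.2 < lam p.1 ∧ TabF n f g (p.1 : ℕ) p.2 = (i : ℕ) + 1}
        = (Fs : Set (Fin n × ℕ)) := by
      ext p
      simp only [Set.mem_setOf_eq, hFs, Finset.coe_filter, Finset.mem_product,
        Finset.mem_univ, Finset.mem_range, true_and, Set.mem_setOf_eq]
      constructor
      · rintro ⟨h1, h2⟩
        rw [← hfFin p.1] at h1
        obtain ⟨hb1, hb2⟩ := (hbox (p.1 : ℕ) p.2).mp ⟨h1, h2⟩
        have := hfB p.1
        exact ⟨by omega, hb1, hb2⟩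
      · rintro ⟨hpB, hb1, hb2⟩
        obtain ⟨h1, h2⟩ := (hbox (p.1 : ℕ) p.2).mpr ⟨hb1, hb2⟩
        rw [hfFin p.1] at h1
        exact ⟨h1, h2⟩
    rw [hseteq, Set.ncard_coe_finset]
    have hfiber : ∀ r : Fin n, Fs.filter (fun p => p.1 = r)
        = (Finset.Ico (muF n f g (i : ℕ) (r : ℕ)) (muF n f g ((i : ℕ)+1) (r : ℕ))).image
            (fun c => (r, c)) := by
      intro r
      ext p
      simp only [hFs, Finset.mem_filter, Finset.mem_product, Finset.mem_univ,
        Finset.mem_range, true_and, Finset.mem_image, Finset.mem_Ico]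
      constructor
      · rintro ⟨⟨hpB, hb1, hb2⟩, hp1⟩
        exact ⟨p.2, ⟨by rw [← hp1]; exact hb1, by rw [← hp1]; exact hb2⟩, by
          rw [← hp1]⟩
      · rintro ⟨c, ⟨hc1, hc2⟩, rfl⟩
        have : muF n f g ((i : ℕ)+1) (r : ℕ) ≤ f (r : ℕ) := hmule _ _ (by omega)
        have := hfB r
        exact ⟨⟨by omega, hc1, hc2⟩, rfl⟩
    have hcard : Fs.card = ∑ r : Fin n,
        (muF n f g ((i : ℕ)+1) (r : ℕ) - muF n f g (i : ℕ) (r : ℕ)) := by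
      rw [Finset.card_eq_sum_card_fiberwise (fun x (_ : x ∈ Fs) => Finset.mem_univ x.1)]
      apply Finset.sum_congr rfl
      intro r _
      rw [hfiber r, Finset.card_image_of_injective _ (fun a b hab => (Prod.mk.injEq _ _ _ _).mp hab |>.2),
        Nat.card_Ico]
    rw [hcard]
    have hptle : ∀ r : Fin n, muF n f g (i : ℕ) (r : ℕ) ≤ muF n f g ((i : ℕ)+1) (r : ℕ) :=
      fun r => hchain _ _ _ (by omega) (by omega)
    have hdist : ∑ r : Fin n, (muF n f g ((i:ℕ)+1) (r:ℕ) - muF n f g (i:ℕ) (r:ℕ))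
        = (∑ r : Fin n, muF n f g ((i:ℕ)+1) (r:ℕ)) - (∑ r : Fin n, muF n f g (i:ℕ) (r:ℕ)) :=
      Finset.sum_tsub_distrib Finset.univ (fun r _ => hptle r)
    rw [hdist]
    have hsumk : ∀ k, k ≤ n → ∑ r : Fin n, muF n f g k (r : ℕ) = ∑ j ∈ Finset.range k, g j := by
      intro k hk
      rw [← Finset.sum_range fun r => muF n f g k r]
      exact hrowsum k hk
    rw [hsumk _ (by omega), hsumk _ (by omega), Finset.sum_range_succ]
    rw [hgFin i]
    omega

theorem maj_mem_hull {n : ℕ} (x : Fin n → ℝ) (hx : Antitone x) :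
    ∀ (y : Fin n → ℝ), Antitone y →
    (∀ t : ℕ, ∑ i : Fin n, (if (i:ℕ) < t then x i else 0)
      ≤ ∑ i : Fin n, (if (i:ℕ) < t then y i else 0)) →
    (∑ i, x i = ∑ i, y i) →
    x ∈ convexHull ℝ {w | ∃ σ : Equiv.Perm (Fin n), w = y ∘ σ} := by
  classical
  suffices H : ∀ d (y : Fin n → ℝ), (Finset.univ.filter fun m => x m ≠ y m).card = d →
      Antitone y →
      (∀ t : ℕ, ∑ i : Fin n, (if (i:ℕ) < t then x i else 0)
        ≤ ∑ i : Fin n, (if (i:ℕ) < t then y i else 0)) →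
      (∑ i, x i = ∑ i, y i) →
      x ∈ convexHull ℝ {w | ∃ σ : Equiv.Perm (Fin n), w = y ∘ σ} by
    intro y hy hps hsum
    exact H _ y rfl hy hps hsum
  intro d
  induction d using Nat.strong_induction_on with
  | _ d IH =>
  intro y hd hy hps hsum
  by_cases hxy : x = y
  · subst hxy
    exact subset_convexHull ℝ _ ⟨Equiv.refl _, by ext m; simp⟩
  -- there is an index where x > y
  have hne : ∃ m, x m ≠ y m := by
    by_contra h
    push_neg at h
    exact hxy (funext h)
  have hgt : ∃ m, y m < x m := by
    by_contra h
    push_neg at h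
    have hall : ∀ m ∈ Finset.univ, x m = y m := by
      intro m _
      exact ((Finset.sum_eq_sum_iff_of_le (fun m _ => h m)).mp hsum m (Finset.mem_univ m))
    exact hxy (funext fun m => hall m (Finset.mem_univ m))
  set Jset := Finset.univ.filter (fun m => y m < x m) with hJset
  have hJne : Jset.Nonempty := by
    obtain ⟨m, hm⟩ := hgt
    exact ⟨m, by simp [hJset, hm]⟩
  set j := Jset.min' hJne with hj
  have hjmem : y j < x j := by
    have := Jset.min'_mem hJne
    simp [hJset] at this
    exact this
  have hjmin : ∀ m, m < j → x m ≤ y m := by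
    intro m hm
    by_contra h
    have : m ∈ Jset := by simp [hJset]; linarith
    have := Jset.min'_le m this
    exact absurd (lt_of_lt_of_le hm this) (lt_irrefl m)
  -- there is an index < j where x < y
  set Iset := Finset.univ.filter (fun m => m < j ∧ x m < y m) with hIset
  have hIne : Iset.Nonempty := by
    by_contra h
    rw [Finset.not_nonempty_iff_eq_empty] at h
    have heq : ∀ m, m < j → x m = y m := by
      intro m hm
      rcases lt_or_eq_of_le (hjmin m hm) with h1 | h1
      · exfalso
        have hmI : m ∈ Iset := by rw [hIset, Finset.mem_filter]; exact ⟨Finset.mem_univ m, hm, h1⟩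
        rw [h] at hmI
        exact absurd hmI (Finset.notMem_empty m)
      · exact h1
    have := hps ((j : ℕ) + 1)
    have hsplit : ∀ z : Fin n → ℝ, ∑ i : Fin n, (if (i:ℕ) < (j:ℕ)+1 then z i else 0)
        = (∑ i : Fin n, (if (i:ℕ) < (j:ℕ) then z i else 0)) + z j := by
      intro z
      have hpt : ∀ m : Fin n, (if (m:ℕ) < (j:ℕ)+1 then z m else 0)
          = (if (m:ℕ) < (j:ℕ) then z m else 0) + (if m = j then z m else 0) := by
        intro m
        by_cases h1 : m = j
        · subst h1; simp
        · have hne : (m:ℕ) ≠ (j:ℕ) := fun hc => h1 (Fin.val_injective hc)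
          by_cases h2 : (m:ℕ) < (j:ℕ)
          · rw [if_pos (by omega), if_pos h2, if_neg h1]; ring
          · rw [if_neg (by omega), if_neg h2, if_neg h1]; ring
      rw [Finset.sum_congr rfl (fun m _ => hpt m), Finset.sum_add_distrib]
      congr 1
      rw [Finset.sum_eq_single j]
      · simp
      · intro b _ hb; simp [hb]
      · intro h; exact absurd (Finset.mem_univ j) h
    rw [hsplit x, hsplit y] at this
    have hxeqy : ∑ i : Fin n, (if (i:ℕ) < (j:ℕ) then x i else 0)
        = ∑ i : Fin n, (if (i:ℕ) < (j:ℕ) then y i else 0) := by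
      apply Finset.sum_congr rfl
      intro m _
      by_cases h2 : (m:ℕ) < (j:ℕ)
      · rw [if_pos h2, if_pos h2, heq m h2]
      · rw [if_neg h2, if_neg h2]
    rw [hxeqy] at this
    linarith
  set i := Iset.max' hIne with hi
  have himem : i < j ∧ x i < y i := by
    have h : i ∈ Finset.univ.filter (fun m => m < j ∧ x m < y m) := Iset.max'_mem hIne
    exact (Finset.mem_filter.mp h).2
  have himax : ∀ m, i < m → m < j → x m = y m := by
    intro m h1 h2
    rcases lt_or_eq_of_le (hjmin m h2) with h3 | h3
    · exfalso
      have hmI : m ∈ Iset := by rw [hIset, Finset.mem_filter]; exact ⟨Finset.mem_univ m, h2, h3⟩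
      have hle : m ≤ i := Iset.le_max' m hmI
      exact absurd (lt_of_lt_of_le h1 hle) (lt_irrefl _)
    · exact h3
  obtain ⟨hij, hxyi⟩ := himem
  have hxij : x j ≤ x i := hx hij.le
  have hyij : y j < y i := by linarith
  set δ := min (y i - x i) (x j - y j) with hδ
  have hδpos : 0 < δ := by
    rw [hδ]; apply lt_min <;> linarith
  have hδle1 : δ ≤ y i - x i := min_le_left _ _
  have hδle2 : δ ≤ x j - y j := min_le_right _ _
  set θ := δ / (y i - y j) with hθ
  have hθpos : 0 < θ := div_pos hδpos (by linarith)
  have hθle : θ ≤ 1 := by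
    rw [hθ, div_le_one (by linarith)]
    linarith
  set y' : Fin n → ℝ := fun m => if m = i then y i - δ else if m = j then y j + δ else y m
    with hy'def
  have hy'i : y' i = y i - δ := by simp [hy'def]
  have hy'j : y' j = y j + δ := by
    have : j ≠ i := fun h => absurd (h ▸ hij) (lt_irrefl _)
    simp [hy'def, this]
  have hy'o : ∀ m, m ≠ i → m ≠ j → y' m = y m := by
    intro m h1 h2; simp [hy'def, h1, h2]
  -- y' is a convex combination of y and y ∘ swap i j
  have hcomb : y' = (1-θ) • y + θ • (y ∘ (Equiv.swap i j)) := by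
    funext m
    have hne : y i - y j ≠ 0 := by linarith
    by_cases h1 : m = i
    · subst h1
      simp only [hy'i, Pi.add_apply, Pi.smul_apply, Function.comp_apply, Equiv.swap_apply_left,
        smul_eq_mul]
      have hθd : θ * (y i - y j) = δ := by rw [hθ]; exact div_mul_cancel₀ δ hne
      linarith
    · by_cases h2 : m = j
      · subst h2
        simp only [hy'j, Pi.add_apply, Pi.smul_apply, Function.comp_apply,
          Equiv.swap_apply_right, smul_eq_mul]
        have hθd : θ * (y i - y j) = δ := by rw [hθ]; exact div_mul_cancel₀ δ hne
        linarith
      · rw [hy'o m h1 h2]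
        simp only [Pi.add_apply, Pi.smul_apply, Function.comp_apply,
          Equiv.swap_apply_of_ne_of_ne h1 h2, smul_eq_mul]
        ring
  have horbmem : ∀ σ : Equiv.Perm (Fin n), (y ∘ σ) ∈ convexHull ℝ
      {w | ∃ σ : Equiv.Perm (Fin n), w = y ∘ σ} :=
    fun σ => subset_convexHull ℝ _ ⟨σ, rfl⟩
  have hOrb : {w | ∃ σ : Equiv.Perm (Fin n), w = y' ∘ σ} ⊆ convexHull ℝ
      {w | ∃ σ : Equiv.Perm (Fin n), w = y ∘ σ} := by
    rintro w ⟨σ, rfl⟩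
    have : y' ∘ σ = (1-θ) • (y ∘ σ) + θ • (y ∘ (σ.trans (Equiv.swap i j))) := by
      funext m
      rw [hcomb]
      simp
    rw [this]
    exact (convex_convexHull ℝ _) (horbmem σ) (horbmem _) (by linarith) (le_of_lt hθpos)
      (by ring)
  refine convexHull_min hOrb (convex_convexHull ℝ _) ?_
  -- apply the inductive hypothesis to y'
  have hy'm : ∀ m, y' m = y m + (if m = i then -δ else 0) + (if m = j then δ else 0) := by
    intro m
    by_cases h1 : m = i
    · subst h1
      have hne2 : i ≠ j := fun h => absurd (h ▸ hij) (lt_irrefl _)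
      rw [hy'i, if_pos rfl, if_neg hne2]
      ring
    · by_cases h2 : m = j
      · subst h2
        rw [hy'j, if_neg h1, if_pos rfl]
        ring
      · rw [hy'o m h1 h2, if_neg h1, if_neg h2]
        ring
  -- antitone
  have hxji : x j ≤ x i := hx hij.le
  have hy'lb : x i ≤ y' i := by rw [hy'i]; linarith
  have hy'ub : y' j ≤ x j := by rw [hy'j]; linarith
  have key : ∀ a b : Fin n, a < b → y' b ≤ y' a := by
      intro a b hab
      by_cases ha1 : a = i
      · subst ha1
        by_cases hb1 : b = j
        · subst hb1; linarith
        · by_cases hbj : b < j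
          · rw [hy'o b (by intro h; subst h; exact absurd hab (lt_irrefl _)) hb1]
            rw [← himax b hab hbj]
            linarith [hx hab.le, hy'lb]
          · have hjb : j < b := by
              rcases lt_trichotomy b j with h | h | h
              · exact absurd h hbj
              · exact absurd h hb1
              · exact h
            rw [hy'o b (by intro h; subst h; exact absurd hab (lt_irrefl _)) hb1]
            have : y b ≤ y j := hy hjb.le
            linarith
      · by_cases ha2 : a = j
        · subst ha2
          have hbj : j < b := hab
          rw [hy'o b (fun h => by subst h; exact absurd (lt_trans hij hbj) (lt_irrefl _))
            (fun h => by subst h; exact absurd hbj (lt_irrefl _)), hy'j]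
          have : y b ≤ y j := hy hbj.le
          linarith
        · -- a ∉ {i,j}
          rw [hy'o a ha1 ha2]
          by_cases hb1 : b = i
          · subst hb1
            have : y i ≤ y a := hy hab.le
            linarith
          · by_cases hb2 : b = j
            · subst hb2
              -- y' j ≤ y a
              rcases lt_trichotomy a i with h | h | h
              · have : y i ≤ y a := hy h.le
                linarith
              · exact absurd h ha1
              · have hxa : x a = y a := himax a h hab
                have : x j ≤ x a := hx hab.le
                linarith
            · rw [hy'o b hb1 hb2]
              exact hy hab.le
  have hy'anti : Antitone y' := by
    intro a b hab
    rcases eq_or_lt_of_le hab with rfl | h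
    · exact le_rfl
    · exact key a b h
  -- partial sums
  have hy'psum : ∀ t : ℕ, ∑ m : Fin n, (if (m:ℕ) < t then x m else 0)
      ≤ ∑ m : Fin n, (if (m:ℕ) < t then y' m else 0) := by
    intro t
    have hsplit : ∑ m : Fin n, (if (m:ℕ) < t then y' m else 0)
        = (∑ m : Fin n, (if (m:ℕ) < t then y m else 0))
          + (if (i:ℕ) < t then -δ else 0) + (if (j:ℕ) < t then δ else 0) := by
      have h1 : ∀ m : Fin n, (if (m:ℕ) < t then y' m else 0)
          = (if (m:ℕ) < t then y m else 0)
            + (if (m:ℕ) < t then (if m = i then -δ else 0) else 0)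
            + (if (m:ℕ) < t then (if m = j then δ else 0) else 0) := by
        intro m
        rw [hy'm m]
        by_cases h : (m:ℕ) < t <;> simp [h]
      rw [Finset.sum_congr rfl (fun m _ => h1 m), Finset.sum_add_distrib,
        Finset.sum_add_distrib]
      congr 1
      · congr 1
        rw [Finset.sum_eq_single i]
        · simp
        · intro b _ hb; simp [hb]
        · intro h; exact absurd (Finset.mem_univ i) h
      · rw [Finset.sum_eq_single j]
        · simp
        · intro b _ hb; simp [hb]
        · intro h; exact absurd (Finset.mem_univ j) h
    rw [hsplit]
    by_cases h1 : (i:ℕ) < t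
    · by_cases h2 : (j:ℕ) < t
      · have := hps t
        rw [if_pos h1, if_pos h2]
        linarith
      · -- i < t ≤ j : need the gap ≥ δ
        rw [if_pos h1, if_neg h2]
        have hgap : δ ≤ ∑ m : Fin n, ((if (m:ℕ) < t then y m else 0)
            - (if (m:ℕ) < t then x m else 0)) := by
          have hterm : ∀ m : Fin n, 0 ≤ (if (m:ℕ) < t then y m else 0)
              - (if (m:ℕ) < t then x m else 0) := by
            intro m
            by_cases h : (m:ℕ) < t
            · rw [if_pos h, if_pos h]
              have hmj : m < j := by
                have : (m:ℕ) < (j:ℕ) := by omega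
                exact this
              linarith [hjmin m hmj]
            · rw [if_neg h, if_neg h]; linarith
          have hsingle : (if (i:ℕ) < t then y i else 0) - (if (i:ℕ) < t then x i else 0)
              ≤ ∑ m : Fin n, ((if (m:ℕ) < t then y m else 0)
                - (if (m:ℕ) < t then x m else 0)) :=
            Finset.single_le_sum (fun m _ => hterm m) (Finset.mem_univ i)
          rw [if_pos h1, if_pos h1] at hsingle
          linarith
        rw [Finset.sum_sub_distrib] at hgap
        linarith
    · -- t ≤ i < j : nothing changed
      have h2 : ¬ (j:ℕ) < t := by
        have : (i:ℕ) < (j:ℕ) := hij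
        omega
      rw [if_neg h1, if_neg h2]
      have := hps t
      linarith
  -- total sum
  have hy'sum : ∑ m, x m = ∑ m, y' m := by
    have : ∑ m, y' m = ∑ m, y m + (-δ) + δ := by
      rw [Finset.sum_congr rfl (fun m _ => hy'm m), Finset.sum_add_distrib,
        Finset.sum_add_distrib]
      congr 1
      · congr 1
        rw [Finset.sum_eq_single i]
        · simp
        · intro b _ hb; simp [hb]
        · intro h; exact absurd (Finset.mem_univ i) h
      · rw [Finset.sum_eq_single j]
        · simp
        · intro b _ hb; simp [hb]
        · intro h; exact absurd (Finset.mem_univ j) h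
    rw [this]
    rw [hsum]
    ring
  -- measure decreases
  have hsub : (Finset.univ.filter fun m => x m ≠ y' m) ⊂ (Finset.univ.filter fun m => x m ≠ y m) := by
    constructor
    · intro m hm
      rw [Finset.mem_filter] at hm ⊢
      refine ⟨Finset.mem_univ m, ?_⟩
      intro hc
      by_cases h1 : m = i
      · subst h1; linarith
      · by_cases h2 : m = j
        · subst h2; linarith
        · rw [hy'o m h1 h2] at hm
          exact hm.2 hc
    · intro hcon
      rcases min_cases (y i - x i) (x j - y j) with ⟨hmin, _⟩ | ⟨hmin, _⟩
      · have hyi' : y' i = x i := by rw [hy'i, hδ, hmin]; ring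
        have hin : i ∈ (Finset.univ.filter fun m => x m ≠ y m) := by
          rw [Finset.mem_filter]; exact ⟨Finset.mem_univ i, by intro h; linarith⟩
        have := hcon hin
        rw [Finset.mem_filter] at this
        exact this.2 hyi'.symm
      · have hyj' : y' j = x j := by rw [hy'j, hδ, hmin]; ring
        have hin : j ∈ (Finset.univ.filter fun m => x m ≠ y m) := by
          rw [Finset.mem_filter]; exact ⟨Finset.mem_univ j, by intro h; linarith⟩
        have := hcon hin
        rw [Finset.mem_filter] at this
        exact this.2 hyj'.symm
  have hlt : (Finset.univ.filter fun m => x m ≠ y' m).card < d := by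
    rw [← hd]
    exact Finset.card_lt_card hsub
  exact IH _ hlt y' rfl hy'anti hy'psum hy'sum

/-- Sum over any subset is at most the sum of the largest `#S` entries, for antitone `lam`. -/
theorem sum_subset_le_top {n : ℕ} (lam : Fin n → ℕ) (hlam : Antitone lam)
    (S : Finset (Fin n)) :
    ∑ i ∈ S, lam i ≤ ∑ i : Fin n, (if (i : ℕ) < S.card then lam i else 0) := by
  classical
  set t := S.card with ht
  have htn : t ≤ n := by
    rw [ht]
    simpa using Finset.card_le_card (Finset.subset_univ S)
  set e : Fin t → Fin n := fun j => ((S.orderIsoOfFin ht.symm j : Fin n)) with he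
  have hemono : StrictMono e := by
    intro u v huv
    have := (S.orderIsoOfFin ht.symm).strictMono huv
    exact this
  have hemb : ∀ m : ℕ, ∀ h : m < t, m ≤ (e ⟨m, h⟩ : ℕ) := by
    intro m
    induction m with
    | zero => intro h; omega
    | succ m IH =>
      intro h
      have h1 : (⟨m, by omega⟩ : Fin t) < ⟨m+1, h⟩ := by
        simp [Fin.lt_def]
      have h2 : (e ⟨m, by omega⟩ : ℕ) < (e ⟨m+1, h⟩ : ℕ) := hemono h1
      have hIH := IH (by omega)
      omega
  have h1 : ∑ i ∈ S, lam i = ∑ j : Fin t, lam (e j) := by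
    rw [← Finset.sum_coe_sort S lam]
    exact (Fintype.sum_equiv (S.orderIsoOfFin ht.symm).toEquiv _ _ (fun j => rfl)).symm
  have h2 : ∀ j : Fin t, lam (e j) ≤ lam ⟨(j : ℕ), by omega⟩ := by
    intro j
    apply hlam
    show ((⟨(j:ℕ), _⟩ : Fin n) : ℕ) ≤ (e j : ℕ)
    exact hemb (j : ℕ) j.isLt
  have h3 : ∑ j : Fin t, lam ⟨(j : ℕ), lt_of_lt_of_le j.isLt htn⟩
      = ∑ i : Fin n, (if (i : ℕ) < t then lam i else 0) := by
    rw [← Finset.sum_filter]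
    refine Finset.sum_bij' (fun (j : Fin t) (_ : j ∈ Finset.univ) =>
        (⟨(j : ℕ), lt_of_lt_of_le j.isLt htn⟩ : Fin n))
      (fun (i : Fin n) (hi : i ∈ Finset.univ.filter (fun i : Fin n => (i:ℕ) < t)) =>
        (⟨(i : ℕ), (Finset.mem_filter.mp hi).2⟩ : Fin t)) ?_ ?_ ?_ ?_ ?_
    · intro j _
      simp only [Finset.mem_filter, Finset.mem_univ, true_and]
      exact j.isLt
    · intro i hi
      exact Finset.mem_univ _
    · intro j _
      rfl
    · intro i hi
      rfl
    · intro j _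
      rfl
  rw [h1, ← h3]
  exact Finset.sum_le_sum (fun j _ => h2 j)

/-- Every point of the permutahedron satisfies the subset-sum inequalities and sum equality. -/
theorem perm_easy {n : ℕ} (lam : Fin n → ℕ) (hlam : Antitone lam)
    (z : Fin n → ℝ) (hz : z ∈ permutahedron (fun i => (lam i : ℝ))) :
    (∑ i, z i = ∑ i, (lam i : ℝ)) ∧
    ∀ S : Finset (Fin n), ∑ i ∈ S, z i
      ≤ ∑ i : Fin n, (if (i : ℕ) < S.card then (lam i : ℝ) else 0) := by
  classical
  constructor
  · have hconv : Convex ℝ {w : Fin n → ℝ | ∑ i, w i = ∑ i, (lam i : ℝ)} := by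
      intro u hu v hv a b ha hb hab
      simp only [Set.mem_setOf_eq] at hu hv ⊢
      simp only [Pi.add_apply, Pi.smul_apply, smul_eq_mul]
      rw [Finset.sum_add_distrib, ← Finset.mul_sum, ← Finset.mul_sum, hu, hv]
      rw [← add_mul, hab, one_mul]
    have horb : {w | ∃ σ : Equiv.Perm (Fin n), w = (fun i => (lam i : ℝ)) ∘ σ}
        ⊆ {w : Fin n → ℝ | ∑ i, w i = ∑ i, (lam i : ℝ)} := by
      rintro w ⟨σ, rfl⟩
      simp only [Set.mem_setOf_eq, Function.comp_apply]
      exact Equiv.sum_comp σ (fun i => (lam i : ℝ))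
    exact convexHull_min horb hconv hz
  · intro S
    have hconv : Convex ℝ {w : Fin n → ℝ | ∑ i ∈ S, w i
        ≤ ∑ i : Fin n, (if (i : ℕ) < S.card then (lam i : ℝ) else 0)} := by
      intro u hu v hv a b ha hb hab
      simp only [Set.mem_setOf_eq] at hu hv ⊢
      simp only [Pi.add_apply, Pi.smul_apply, smul_eq_mul]
      rw [Finset.sum_add_distrib, ← Finset.mul_sum, ← Finset.mul_sum]
      calc a * (∑ i ∈ S, u i) + b * (∑ i ∈ S, v i)
          ≤ a * (∑ i : Fin n, (if (i : ℕ) < S.card then (lam i : ℝ) else 0))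
            + b * (∑ i : Fin n, (if (i : ℕ) < S.card then (lam i : ℝ) else 0)) := by
            apply add_le_add
            · exact mul_le_mul_of_nonneg_left hu ha
            · exact mul_le_mul_of_nonneg_left hv hb
      _ = _ := by rw [← add_mul, hab, one_mul]
    have horb : {w | ∃ σ : Equiv.Perm (Fin n), w = (fun i => (lam i : ℝ)) ∘ σ}
        ⊆ {w : Fin n → ℝ | ∑ i ∈ S, w i
          ≤ ∑ i : Fin n, (if (i : ℕ) < S.card then (lam i : ℝ) else 0)} := by
      rintro w ⟨σ, rfl⟩
      simp only [Set.mem_setOf_eq, Function.comp_apply]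
      have h1 : ∑ i ∈ S, (lam (σ i) : ℝ) = ∑ i ∈ S.image σ, (lam i : ℝ) := by
        rw [Finset.sum_image (fun a _ b _ h => σ.injective h)]
      have h2 : (S.image σ).card = S.card := Finset.card_image_of_injective S σ.injective
      rw [h1]
      have h3 := sum_subset_le_top lam hlam (S.image σ)
      rw [h2] at h3
      calc ∑ i ∈ S.image σ, (lam i : ℝ)
          = ((∑ i ∈ S.image σ, lam i : ℕ) : ℝ) := by push_cast; ring
      _ ≤ ((∑ i : Fin n, (if (i : ℕ) < S.card then lam i else 0) : ℕ) : ℝ) := by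
            exact_mod_cast h3
      _ = ∑ i : Fin n, (if (i : ℕ) < S.card then (lam i : ℝ) else 0) := by
            push_cast
            apply Finset.sum_congr rfl
            intro i _
            split <;> simp
    exact convexHull_min horb hconv hz

/-- A natural vector satisfying the majorization inequalities lies in the permutahedron. -/
theorem natmaj_mem_perm {n : ℕ} (lam : Fin n → ℕ) (hlam : Antitone lam)
    (a : Fin n → ℕ)
    (hsub : ∀ S : Finset (Fin n),
      ∑ i ∈ S, a i ≤ ∑ i : Fin n, (if (i : ℕ) < S.card then lam i else 0))
    (hsum : ∑ i, a i = ∑ i, lam i) :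
    (fun i => (a i : ℝ)) ∈ permutahedron (fun i => (lam i : ℝ)) := by
  classical
  set xR : Fin n → ℝ := fun i => (a i : ℝ) with hxR
  set π : Equiv.Perm (Fin n) := Fin.revPerm.trans (Tuple.sort xR) with hπ
  set x : Fin n → ℝ := xR ∘ π with hx
  have hxanti : Antitone x := by
    intro u v huv
    have h1 : v.rev ≤ u.rev := Fin.rev_le_rev.mpr huv
    have := Tuple.monotone_sort xR h1
    exact this
  set y : Fin n → ℝ := fun i => (lam i : ℝ) with hy
  have hyanti : Antitone y := by
    intro u v huv
    have := hlam huv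
    show (lam v : ℝ) ≤ (lam u : ℝ)
    exact_mod_cast this
  have hps : ∀ t : ℕ, ∑ i : Fin n, (if (i:ℕ) < t then x i else 0)
      ≤ ∑ i : Fin n, (if (i:ℕ) < t then y i else 0) := by
    intro t
    set Ft := Finset.univ.filter (fun i : Fin n => (i : ℕ) < t) with hFt
    have hL : ∑ i : Fin n, (if (i:ℕ) < t then x i else 0) = ∑ i ∈ Ft.image π, xR i := by
      have e1 : ∑ i : Fin n, (if (i:ℕ) < t then x i else 0) = ∑ i ∈ Ft, x i := by
        rw [hFt, Finset.sum_filter]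
      rw [e1, Finset.sum_image (fun u _ v _ h => π.injective h)]
      rfl
    have hcard : (Ft.image π).card = min t n := by
      rw [Finset.card_image_of_injective _ π.injective, hFt]
      rcases Nat.le_total t n with h | h
      · rw [min_eq_left h]
        have : Finset.univ.filter (fun i : Fin n => (i : ℕ) < t)
            = (Finset.range t).attachFin (fun m hm => by
                rw [Finset.mem_range] at hm; omega) := by
          ext i
          simp [Finset.mem_attachFin, Finset.mem_range]
        rw [this, Finset.card_attachFin, Finset.card_range]
      · rw [min_eq_right h]
        have : Finset.univ.filter (fun i : Fin n => (i : ℕ) < t) = Finset.univ := by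
          ext i
          simp only [Finset.mem_filter, Finset.mem_univ, true_and, iff_true]
          have := i.isLt; omega
        rw [this]
        simp
    have hR : ∑ i : Fin n, (if (i:ℕ) < t then y i else 0)
        = ((∑ i : Fin n, (if (i:ℕ) < min t n then lam i else 0) : ℕ) : ℝ) := by
      push_cast
      apply Finset.sum_congr rfl
      intro i _
      have := i.isLt
      by_cases h : (i : ℕ) < t
      · rw [if_pos h, if_pos (by omega)]
      · rw [if_neg h, if_neg (by omega)]
    have hsub' := hsub (Ft.image π)
    rw [hcard] at hsub'
    rw [hL, hR]
    calc ∑ i ∈ Ft.image π, xR i = ((∑ i ∈ Ft.image π, a i : ℕ) : ℝ) := by push_cast; rfl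
    _ ≤ _ := by exact_mod_cast hsub'
  have hsumR : ∑ i, x i = ∑ i, y i := by
    have h1 : ∑ i, x i = ∑ i, xR i := Equiv.sum_comp π xR
    rw [h1, hxR, hy]
    beta_reduce
    exact_mod_cast hsum
  have hmem := maj_mem_hull x hxanti y hyanti hps hsumR
  -- transport back through π⁻¹
  have himg : xR ∈ (fun w : Fin n → ℝ => w ∘ (π⁻¹ : Equiv.Perm (Fin n))) ''
      (convexHull ℝ {w | ∃ σ : Equiv.Perm (Fin n), w = y ∘ σ}) := by
    refine ⟨x, hmem, ?_⟩
    funext m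
    simp [hx]
  set L : (Fin n → ℝ) →ₗ[ℝ] (Fin n → ℝ) := LinearMap.funLeft ℝ ℝ (π⁻¹ : Equiv.Perm (Fin n))
    with hLdef
  have hLim : (fun w : Fin n → ℝ => w ∘ (π⁻¹ : Equiv.Perm (Fin n)))
      = (L.toAffineMap : (Fin n → ℝ) → (Fin n → ℝ)) := rfl
  rw [hLim] at himg
  rw [AffineMap.image_convexHull] at himg
  refine convexHull_min ?_ (convex_convexHull ℝ _) himg
  rintro w ⟨w', ⟨σ, rfl⟩, rfl⟩
  refine subset_convexHull ℝ _ ⟨(π⁻¹ : Equiv.Perm (Fin n)).trans σ, ?_⟩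
  funext m
  rfl

theorem ssyt_weight_maj {n : ℕ} (lam : Fin n → ℕ) (hlam : Antitone lam)
    (T : Fin n → ℕ → ℕ) (hT : IsSSYT lam T) (α : Fin n → ℕ)
    (hw : ∀ i : Fin n, α i
      = Set.ncard {p : Fin n × ℕ | p.2 < lam p.1 ∧ T p.1 p.2 = (i : ℕ) + 1}) :
    (∑ i, α i = ∑ i, lam i) ∧
    ∀ S : Finset (Fin n), ∑ i ∈ S, α i
      ≤ ∑ i : Fin n, (if (i : ℕ) < S.card then lam i else 0) := by
  classical
  rcases Nat.eq_zero_or_pos n with hn0 | hn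
  · subst hn0
    constructor
    · simp
    · intro S
      simp
  obtain ⟨hbnd, hrow, hcol⟩ := hT
  set N := (∑ i, lam i) + 1 with hN
  have hlamN : ∀ r : Fin n, lam r < N := by
    intro r
    have : lam r ≤ ∑ i, lam i :=
      Finset.single_le_sum (fun i _ => Nat.zero_le (lam i)) (Finset.mem_univ r)
    omega
  set Box : Finset (Fin n × ℕ) := (Finset.univ ×ˢ Finset.range N).filter
    (fun p => p.2 < lam p.1) with hBox
  have hBoxmem : ∀ p : Fin n × ℕ, p ∈ Box ↔ p.2 < lam p.1 := by
    intro p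
    rw [hBox, Finset.mem_filter, Finset.mem_product]
    constructor
    · rintro ⟨_, h⟩; exact h
    · intro h
      exact ⟨⟨Finset.mem_univ _, Finset.mem_range.mpr (lt_trans h (hlamN p.1))⟩, h⟩
  set key : (Fin n × ℕ) → Fin n := fun p => ⟨min (T p.1 p.2 - 1) (n-1), by omega⟩ with hkeydef
  have hkey : ∀ p ∈ Box, (key p : ℕ) = T p.1 p.2 - 1 ∧ 1 ≤ T p.1 p.2 ∧ T p.1 p.2 ≤ n := by
    intro p hp
    rw [hBoxmem] at hp
    obtain ⟨h1, h2⟩ := hbnd p.1 p.2 hp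
    constructor
    · rw [hkeydef]
      show min (T p.1 p.2 - 1) (n-1) = T p.1 p.2 - 1
      omega
    · exact ⟨h1, h2⟩
  have hBi : ∀ i : Fin n, α i = (Box.filter (fun p => T p.1 p.2 = (i : ℕ) + 1)).card := by
    intro i
    rw [hw i]
    have hseteq : {p : Fin n × ℕ | p.2 < lam p.1 ∧ T p.1 p.2 = (i : ℕ) + 1}
        = ↑(Box.filter (fun p => T p.1 p.2 = (i : ℕ) + 1)) := by
      ext p
      simp only [Set.mem_setOf_eq, Finset.coe_filter, Set.mem_setOf_eq, hBoxmem]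
    rw [hseteq, Set.ncard_coe_finset]
  -- partial sums are cardinalities
  have hSsum : ∀ S : Finset (Fin n),
      ∑ i ∈ S, α i = (Box.filter (fun p => key p ∈ S)).card := by
    intro S
    set BS := Box.filter (fun p => key p ∈ S) with hBS
    have hmapsinto : ∀ p ∈ BS, key p ∈ S := by
      intro p hp
      exact (Finset.mem_filter.mp hp).2
    rw [Finset.card_eq_sum_card_fiberwise hmapsinto]
    apply Finset.sum_congr rfl
    intro i hi
    rw [hBi i]
    congr 1
    ext p
    simp only [hBS, Finset.mem_filter, and_assoc]
    constructor
    · rintro ⟨hp, hT1⟩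
      obtain ⟨hk, h1, h2⟩ := hkey p hp
      have hkeq : key p = i := by
        apply Fin.ext
        rw [hk, hT1]
        omega
      exact ⟨hp, by rw [hkeq]; exact hi, hkeq⟩
    · rintro ⟨hp, hkS, hki⟩
      obtain ⟨hk, h1, h2⟩ := hkey p hp
      refine ⟨hp, ?_⟩
      have : (key p : ℕ) = (i : ℕ) := by rw [hki]
      omega
  -- total sum
  have hBoxcard : Box.card = ∑ r, lam r := by
    have hmaps : ∀ p ∈ Box, p.1 ∈ (Finset.univ : Finset (Fin n)) := fun p _ => Finset.mem_univ _
    rw [Finset.card_eq_sum_card_fiberwise hmaps]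
    apply Finset.sum_congr rfl
    intro r _
    have hfib : Box.filter (fun p => p.1 = r)
        = (Finset.range (lam r)).image (fun c => (r, c)) := by
      ext p
      simp only [Finset.mem_filter, Finset.mem_image, Finset.mem_range, hBoxmem]
      constructor
      · rintro ⟨h1, h2⟩
        exact ⟨p.2, by rw [← h2]; exact h1, by rw [← h2]⟩
      · rintro ⟨c, hc, rfl⟩
        exact ⟨hc, rfl⟩
    rw [hfib, Finset.card_image_of_injective _ (fun a b hab => ((Prod.mk.injEq _ _ _ _).mp hab).2),
      Finset.card_range]
  constructor
  · have := hSsum Finset.univ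
    simp only [Finset.mem_univ, Finset.filter_true] at this
    rw [this]
    have : Box.filter (fun p => key p ∈ Finset.univ) = Box := by
      apply Finset.filter_true_of_mem
      intro p _
      exact Finset.mem_univ _
    rw [this] at *
    omega
  · intro S
    rw [hSsum S]
    set BS := Box.filter (fun p => key p ∈ S) with hBS
    set Tgt : Finset (Fin n × ℕ) := (Finset.univ ×ˢ Finset.range N).filter
      (fun q => (q.1 : ℕ) < S.card ∧ q.2 < lam q.1) with hTgt
    have hTgtmem : ∀ q : Fin n × ℕ, q ∈ Tgt ↔ ((q.1:ℕ) < S.card ∧ q.2 < lam q.1) := by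
      intro q
      rw [hTgt, Finset.mem_filter, Finset.mem_product]
      constructor
      · rintro ⟨_, h⟩; exact h
      · intro h
        exact ⟨⟨Finset.mem_univ _, Finset.mem_range.mpr (lt_trans h.2 (hlamN q.1))⟩, h⟩
    have hTgtcard : Tgt.card = ∑ i : Fin n, (if (i : ℕ) < S.card then lam i else 0) := by
      have hmaps : ∀ q ∈ Tgt, q.1 ∈ (Finset.univ : Finset (Fin n)) := fun q _ => Finset.mem_univ _
      rw [Finset.card_eq_sum_card_fiberwise hmaps]
      apply Finset.sum_congr rfl
      intro r _
      by_cases hr : (r : ℕ) < S.card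
      · rw [if_pos hr]
        have hfib : Tgt.filter (fun q => q.1 = r)
            = (Finset.range (lam r)).image (fun c => (r, c)) := by
          ext q
          simp only [Finset.mem_filter, Finset.mem_image, Finset.mem_range, hTgtmem]
          constructor
          · rintro ⟨⟨h1, h2⟩, h3⟩
            exact ⟨q.2, by rw [← h3]; exact h2, by rw [← h3]⟩
          · rintro ⟨c, hc, rfl⟩
            exact ⟨⟨hr, hc⟩, rfl⟩
        rw [hfib, Finset.card_image_of_injective _
          (fun a b hab => ((Prod.mk.injEq _ _ _ _).mp hab).2), Finset.card_range]
      · rw [if_neg hr]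
        have hfib : Tgt.filter (fun q => q.1 = r) = ∅ := by
          ext q
          simp only [Finset.mem_filter, hTgtmem, Finset.notMem_empty, iff_false]
          rintro ⟨⟨h1, h2⟩, h3⟩
          rw [h3] at h1
          exact hr h1
        rw [hfib, Finset.card_empty]
    rw [← hTgtcard]
    -- the injection
    set cntp : (Fin n × ℕ) → ℕ := fun p => (BS.filter (fun q => q.1 < p.1 ∧ q.2 = p.2)).card
      with hcntp
    have hcnt_le : ∀ p : Fin n × ℕ, cntp p ≤ (p.1 : ℕ) := by
      intro p
      rw [hcntp]
      calc (BS.filter (fun q => q.1 < p.1 ∧ q.2 = p.2)).card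
          ≤ (Finset.range (p.1 : ℕ)).card := by
            apply Finset.card_le_card_of_injOn (fun q => (q.1 : ℕ))
            · intro q hq
              rw [Finset.mem_coe, Finset.mem_filter] at hq
              exact Finset.mem_range.mpr hq.2.1
            · intro q hq q' hq' hqq
              simp only [Finset.coe_filter, Set.mem_setOf_eq] at hq hq'
              have h1 : q.1 = q'.1 := Fin.val_injective hqq
              have h2 : q.2 = q'.2 := by rw [hq.2.2, hq'.2.2]
              exact Prod.ext h1 h2
      _ = (p.1 : ℕ) := Finset.card_range _
    have hBS_box : ∀ p ∈ BS, p.2 < lam p.1 ∧ key p ∈ S := by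
      intro p hp
      rw [hBS, Finset.mem_filter] at hp
      exact ⟨(hBoxmem p).mp hp.1, hp.2⟩
    have hcnt_lt : ∀ p ∈ BS, cntp p < S.card := by
      intro p hp
      set colS := BS.filter (fun q => q.1 ≤ p.1 ∧ q.2 = p.2) with hcolS
      have h1 : cntp p < colS.card := by
        apply Finset.card_lt_card
        constructor
        · intro q hq
          rw [Finset.mem_filter] at hq ⊢
          exact ⟨hq.1, le_of_lt hq.2.1, hq.2.2⟩
        · intro hcon
          have hpc : p ∈ colS := by
            rw [hcolS, Finset.mem_filter]
            exact ⟨hp, le_refl _, rfl⟩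
          have := hcon hpc
          rw [Finset.mem_filter] at this
          exact absurd this.2.1 (lt_irrefl _)
      have h2 : colS.card ≤ S.card := by
        apply Finset.card_le_card_of_injOn key
        · intro q hq
          rw [Finset.mem_coe, hcolS, Finset.mem_filter] at hq
          exact (hBS_box q hq.1).2
        · intro q hq q' hq' hqq
          simp only [hcolS, Finset.coe_filter, Set.mem_setOf_eq] at hq hq'
          obtain ⟨hqBS, hqle, hqc⟩ := hq
          obtain ⟨hq'BS, hq'le, hq'c⟩ := hq'
          have hqBox : q ∈ Box := (Finset.mem_filter.mp hqBS).1
          have hq'Box : q' ∈ Box := (Finset.mem_filter.mp hq'BS).1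
          obtain ⟨hk1, hT1, _⟩ := hkey q hqBox
          obtain ⟨hk2, hT2, _⟩ := hkey q' hq'Box
          have hTeq : T q.1 q.2 = T q'.1 q'.2 := by
            have : (key q : ℕ) = (key q' : ℕ) := by rw [hqq]
            omega
          have hq2 : q.2 = q'.2 := by rw [hqc, hq'c]
          have hfst : q.1 = q'.1 := by
            rcases lt_trichotomy q.1 q'.1 with h | h | h
            · exfalso
              have hlt2 := hcol q.1 q'.1 h q.2 (by rw [hq2]; exact (hBoxmem q').mp hq'Box)
                ((hBoxmem q).mp hqBox)
              have he2 : T q'.1 q.2 = T q'.1 q'.2 := by rw [hq2]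
              omega
            · exact h
            · exfalso
              have hlt2 := hcol q'.1 q.1 h q'.2 (by rw [← hq2]; exact (hBoxmem q).mp hqBox)
                ((hBoxmem q').mp hq'Box)
              have he2 : T q.1 q'.2 = T q.1 q.2 := by rw [hq2]
              omega
          exact Prod.ext hfst hq2
      omega
    have hbound : ∀ p : Fin n × ℕ, cntp p < n := by
      intro p
      have := hcnt_le p
      have := p.1.isLt
      omega
    apply Finset.card_le_card_of_injOn
      (fun p => ((⟨cntp p, hbound p⟩ : Fin n), p.2))
    · intro p hp
      rw [Finset.mem_coe, hTgtmem]
      constructor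
      · show cntp p < S.card
        exact hcnt_lt p hp
      · show p.2 < lam (⟨cntp p, hbound p⟩ : Fin n)
        have h1 : (⟨cntp p, hbound p⟩ : Fin n) ≤ p.1 := hcnt_le p
        calc p.2 < lam p.1 := (hBS_box p hp).1
        _ ≤ lam (⟨cntp p, hbound p⟩ : Fin n) := hlam h1
    · intro p hp p' hp' heq
      simp only [Prod.mk.injEq] at heq
      obtain ⟨h1, h2⟩ := heq
      have hcnteq : cntp p = cntp p' := congrArg Fin.val h1
      have hkeymono : ∀ q q' : Fin n × ℕ, q ∈ BS → q' ∈ BS → q.2 = q'.2 → q.1 < q'.1 →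
          cntp q < cntp q' := by
        intro q q' hq hq' hcc hlt
        apply Finset.card_lt_card
        constructor
        · intro w hw'
          rw [Finset.mem_filter] at hw' ⊢
          exact ⟨hw'.1, lt_trans hw'.2.1 hlt, by rw [hw'.2.2, hcc]⟩
        · intro hcon
          have hqin : q ∈ BS.filter (fun w => w.1 < q'.1 ∧ w.2 = q'.2) := by
            rw [Finset.mem_filter]
            exact ⟨hq, hlt, hcc⟩
          have := hcon hqin
          rw [Finset.mem_filter] at this
          exact absurd this.2.1 (lt_irrefl _)
      have hfst : p.1 = p'.1 := by
        rcases lt_trichotomy p.1 p'.1 with h | h | h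
        · exact absurd hcnteq (Nat.ne_of_lt (hkeymono p p' hp hp' h2 h))
        · exact h
        · exact absurd hcnteq.symm (Nat.ne_of_lt (hkeymono p' p hp' hp h2.symm h))
      exact Prod.ext hfst h2

theorem kostka_set_finite {n : ℕ} (lam : Fin n → ℕ) (α : Fin n →₀ ℕ) :
    {T : Fin n → ℕ → ℕ | IsSSYT lam T ∧ (∀ (r : Fin n) (c : ℕ), lam r ≤ c → T r c = 0) ∧
      ∀ i : Fin n, α i
        = Set.ncard {p : Fin n × ℕ | p.2 < lam p.1 ∧ T p.1 p.2 = (i : ℕ) + 1}}.Finite := by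
  classical
  set N := (∑ i, lam i) + 1 with hN
  have hlamN : ∀ r : Fin n, lam r < N := by
    intro r
    have : lam r ≤ ∑ i, lam i :=
      Finset.single_le_sum (fun i _ => Nat.zero_le (lam i)) (Finset.mem_univ r)
    omega
  apply Set.Finite.subset (Set.finite_range (fun (F : Fin n → Fin N → Fin (n+1)) =>
    (fun (r : Fin n) (c : ℕ) => if h : c < N then (F r ⟨c, h⟩ : ℕ) else 0)))
  rintro T ⟨⟨hbnd, -, -⟩, hz, -⟩
  have hTle : ∀ r c, T r c ≤ n := by
    intro r c
    by_cases h : c < lam r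
    · exact (hbnd r c h).2
    · rw [hz r c (by omega)]
      omega
  refine ⟨fun r c => ⟨T r (c : ℕ), by have := hTle r (c : ℕ); omega⟩, ?_⟩
  funext r c
  by_cases h : c < N
  · simp [h]
  · have hzrc : T r c = 0 := hz r c (by have := hlamN r; omega)
    simp [h, hzrc]

theorem schur_coeff_eq {n : ℕ} (lam : Fin n → ℕ) (α : Fin n →₀ ℕ)
    (hle : α ∈ Finset.Iic (Finsupp.equivFunOnFinite.symm (fun _ : Fin n => ∑ i, lam i))) :
    MvPolynomial.coeff α (schur lam) = (kostka lam α : ℝ) := by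
  classical
  unfold schur
  rw [MvPolynomial.coeff_sum]
  rw [Finset.sum_eq_single_of_mem α hle]
  · rw [MvPolynomial.coeff_smul, MvPolynomial.coeff_monomial, if_pos rfl]
    simp
  · intro β _ hβ
    rw [MvPolynomial.coeff_smul, MvPolynomial.coeff_monomial, if_neg hβ]
    simp

theorem schur_coeff_zero {n : ℕ} (lam : Fin n → ℕ) (α : Fin n →₀ ℕ)
    (hnle : α ∉ Finset.Iic (Finsupp.equivFunOnFinite.symm (fun _ : Fin n => ∑ i, lam i))) :
    MvPolynomial.coeff α (schur lam) = 0 := by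
  classical
  unfold schur
  rw [MvPolynomial.coeff_sum]
  apply Finset.sum_eq_zero
  intro β hβ
  have hne : β ≠ α := by rintro rfl; exact hnle hβ
  rw [MvPolynomial.coeff_smul, MvPolynomial.coeff_monomial, if_neg hne]
  simp

/-- The positivity half of the theorem. -/
theorem schur_pos_of_mem_perm {n : ℕ} (lam : Fin n → ℕ) (hlam : Antitone lam)
    (α : Fin n →₀ ℕ)
    (hmem : (fun i => (α i : ℝ)) ∈ permutahedron (fun i => (lam i : ℝ))) :
    0 < MvPolynomial.coeff α (schur lam) := by
  classical
  obtain ⟨hsumR, hsubR⟩ := perm_easy lam hlam _ hmem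
  have hsumN : ∑ i, α i = ∑ i, lam i := by
    have : ((∑ i, α i : ℕ) : ℝ) = ((∑ i, lam i : ℕ) : ℝ) := by
      push_cast
      exact hsumR
    exact_mod_cast this
  have hsubN : ∀ S : Finset (Fin n),
      ∑ i ∈ S, α i ≤ ∑ i : Fin n, (if (i : ℕ) < S.card then lam i else 0) := by
    intro S
    have h1 := hsubR S
    have h2 : ((∑ i ∈ S, α i : ℕ) : ℝ) ≤ ((∑ i : Fin n,
        (if (i : ℕ) < S.card then lam i else 0) : ℕ) : ℝ) := by
      push_cast
      calc (∑ i ∈ S, (α i : ℝ)) ≤ ∑ i : Fin n, (if (i : ℕ) < S.card then (lam i : ℝ) else 0) :=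
        h1
      _ = ∑ i : Fin n, (if (i : ℕ) < S.card then ((lam i : ℕ) : ℝ) else 0) := rfl
      _ = _ := by
        apply Finset.sum_congr rfl
        intro i _
        split <;> simp
    exact_mod_cast h2
  obtain ⟨T, hT⟩ := exists_ssyt lam hlam α hsubN hsumN
  have hk : 0 < kostka lam α := (Set.ncard_pos (kostka_set_finite lam α)).mpr ⟨T, hT⟩
  have hIic : α ∈ Finset.Iic (Finsupp.equivFunOnFinite.symm (fun _ : Fin n => ∑ i, lam i)) := by
    rw [Finset.mem_Iic]
    rw [Finsupp.le_def]
    intro i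
    have h1 : α i ≤ ∑ j, α j :=
      Finset.single_le_sum (fun j _ => Nat.zero_le (α j)) (Finset.mem_univ i)
    have h2 : (Finsupp.equivFunOnFinite.symm (fun _ : Fin n => ∑ i, lam i)) i
        = ∑ i, lam i := rfl
    omega
  rw [schur_coeff_eq lam α hIic]
  exact_mod_cast hk

theorem newton_schur_eq {n : ℕ} (lam : Fin n → ℕ) (hlam : Antitone lam) :
    newton (schur lam) = permutahedron (fun i => (lam i : ℝ)) := by
  classical
  apply Set.Subset.antisymm
  · -- newton ⊆ permutahedron
    unfold newton
    apply convexHull_min ?_ (convex_convexHull ℝ _)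
    rintro z ⟨α, hαsupp, rfl⟩
    rw [Finset.mem_coe, MvPolynomial.mem_support_iff] at hαsupp
    -- so kostka ≠ 0, hence an SSYT of weight α exists
    by_cases hIic : α ∈ Finset.Iic (Finsupp.equivFunOnFinite.symm (fun _ : Fin n => ∑ i, lam i))
    · have hco := schur_coeff_eq lam α hIic
      have hk : kostka lam α ≠ 0 := by
        intro h
        rw [h] at hco
        exact hαsupp (by rw [hco]; simp)
      obtain ⟨T, hT1, hT2, hT3⟩ := Set.nonempty_of_ncard_ne_zero hk
      obtain ⟨hsumN, hsubN⟩ := ssyt_weight_maj lam hlam T hT1 (fun i => α i) (fun i => hT3 i)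
      exact natmaj_mem_perm lam hlam (fun i => α i) hsubN hsumN
    · exact absurd (schur_coeff_zero lam α hIic) hαsupp
  · -- permutahedron ⊆ newton
    unfold permutahedron
    apply convexHull_min ?_ (convex_convexHull ℝ _)
    rintro w ⟨σ, rfl⟩
    set ασ : Fin n →₀ ℕ := Finsupp.equivFunOnFinite.symm (fun i => lam (σ i)) with hασ
    have hcast : (fun i => (ασ i : ℝ)) = (fun i => (lam i : ℝ)) ∘ σ := by
      funext i
      rfl
    have hmem : (fun i => (ασ i : ℝ)) ∈ permutahedron (fun i => (lam i : ℝ)) := by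
      rw [hcast]
      exact subset_convexHull ℝ _ ⟨σ, rfl⟩
    have hpos := schur_pos_of_mem_perm lam hlam ασ hmem
    have hsupp : ασ ∈ (schur lam).support := MvPolynomial.mem_support_iff.mpr (ne_of_gt hpos)
    apply subset_convexHull ℝ _
    exact ⟨ασ, by simpa using hsupp, hcast⟩

/-- The Newton polytope of the Schur polynomial `s_λ(x_1, …, x_n)` is the permutahedron
`P_λ`, and `s_λ` has SNP: every lattice point `α ∈ P_λ` has strictly positive coefficient
(a Kostka number). -/
theorem schur_newton_eq_permutahedron {n : ℕ} (lam : Fin n → ℕ) (hlam : Antitone lam) :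
    newton (schur lam) = permutahedron (fun i => (lam i : ℝ)) ∧
      ∀ α : Fin n →₀ ℕ, (fun i => (α i : ℝ)) ∈ permutahedron (fun i => (lam i : ℝ)) →
        0 < MvPolynomial.coeff α (schur lam) :=
  ⟨newton_schur_eq lam hlam, fun α hmem => schur_pos_of_mem_perm lam hlam α hmem⟩
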